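/- There exists an r-Smullyan model which satisfies F-Tarski+ (there is no M-predicate H such that False_M^+ = Φ(H) ∩ Sent_M^+) but does not satisfy T-Tarski (there is no M-predicate H with Φ(H) = True_M). Concretely, the simple model with Σ = {r, ♯} and Φ(♯) = ∅, extended by the r-Smullyan rule, is such a model. -/
import Mathlib


/-- A Smullyan model over a set of symbols `α`: a set `pred` of predicates
(finite strings over `α`) satisfying the prefix-freeness requirement (†), together
with a naming function `phi` assigning a set of strings to each string
(only its values on `pred` are relevant). -/
structure SmullyanModel (α : Type) where
  pred : Set (List α)
  prefixFree : ∀ H ∈ pred, ∀ X : List α, X ≠ [] → H ++ X ∉ pred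
  phi : List α → Set (List α)

namespace SmullyanModel

variable {α : Type} (M : SmullyanModel α)

/-- The set of `M`-sentences: strings of the form `H ++ X` with `H` a predicate. -/
def sent : Set (List α) := {S | ∃ H ∈ M.pred, ∃ X : List α, S = H ++ X}

/-- `Sent_M^+ = Sent_M \ Pred_M`. -/
def sentPlus : Set (List α) := M.sent \ M.pred

/-- `True_M`: the set of true `M`-sentences. -/
def trueSet : Set (List α) := {S | ∃ H ∈ M.pred, ∃ X ∈ M.phi H, S = H ++ X}

/-- `True_M^+ = True_M \ Pred_M`. -/
def truePlus : Set (List α) := M.trueSet \ M.pred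

/-- `False_M = Sent_M \ True_M`. -/
def falseSet : Set (List α) := M.sent \ M.trueSet

/-- `False_M^+ = Sent_M^+ \ True_M^+`. -/
def falsePlus : Set (List α) := M.sentPlus \ M.truePlus

/-- `M ⊨ S`. -/
def Sat (S : List α) : Prop := S ∈ M.trueSet

/-- `S ∈ Sent_M^+` is an `M`-fixed point of `H` if `M ⊨ S ↔ M ⊨ HS`. -/
def IsFixedPoint (H S : List α) : Prop :=
  S ∈ M.sentPlus ∧ (M.Sat S ↔ M.Sat (H ++ S))

/-- `M` is an `n`-Smullyan model (with negation symbol `n : α`):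
for every predicate `H`, `nH` is a predicate and `Φ(nH) = Σ* \ Φ(H)`. -/
def IsNModel (n : α) : Prop :=
  ∀ H ∈ M.pred, (n :: H) ∈ M.pred ∧ M.phi (n :: H) = {X : List α | X ∉ M.phi H}

/-- `M` is an `r`-Smullyan model (with repeat symbol `r : α`):
for every predicate `H`, `rH` is a predicate and `Φ(rH) = {K ∈ Pred : KK ∈ Φ(H)}`. -/
def IsRModel (r : α) : Prop :=
  ∀ H ∈ M.pred, (r :: H) ∈ M.pred ∧
    M.phi (r :: H) = {K : List α | K ∈ M.pred ∧ K ++ K ∈ M.phi H}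

/-- FPT: every `M`-predicate has an `M`-fixed point. -/
def FPT : Prop := ∀ H ∈ M.pred, ∃ S : List α, M.IsFixedPoint H S

/-- T-Tarski: no `M`-predicate names `True_M`. -/
def TTarski : Prop := ¬ ∃ H ∈ M.pred, M.phi H = M.trueSet

/-- F-Tarski: no `M`-predicate names `False_M`. -/
def FTarski : Prop := ¬ ∃ H ∈ M.pred, M.phi H = M.falseSet

/-- T-Tarski⁺: there is no `M`-predicate `H` with `True_M⁺ = Φ(H) ∩ Sent_M⁺`. -/
def TTarskiPlus : Prop := ¬ ∃ H ∈ M.pred, M.truePlus = M.phi H ∩ M.sentPlus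

/-- F-Tarski⁺: there is no `M`-predicate `H` with `False_M⁺ = Φ(H) ∩ Sent_M⁺`. -/
def FTarskiPlus : Prop := ¬ ∃ H ∈ M.pred, M.falsePlus = M.phi H ∩ M.sentPlus

/-- mG1. -/
def MG1 : Prop :=
  ∀ H ∈ M.pred, M.phi H ⊆ M.trueSet →
    ∃ S ∈ M.sent, M.Sat S ∧ S ∉ M.phi H

/-- mG1⁺. -/
def MG1Plus : Prop :=
  ∀ H ∈ M.pred, M.phi H ∩ M.sentPlus ⊆ M.truePlus →
    ∃ S ∈ M.sentPlus, M.Sat S ∧ S ∉ M.phi H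

/-- G1 (for `n`-Smullyan models). -/
def G1 (n : α) : Prop :=
  ∀ H ∈ M.pred, M.phi H ⊆ M.trueSet →
    ∃ S ∈ M.sent, S ∉ M.phi H ∧ (n :: S) ∉ M.phi H

/-- G1⁺ (for `n`-Smullyan models). -/
def G1Plus (n : α) : Prop :=
  ∀ H ∈ M.pred, M.phi H ∩ M.sentPlus ⊆ M.truePlus →
    ∃ S ∈ M.sentPlus, S ∉ M.phi H ∧ (n :: S) ∉ M.phi H

/-- The predicate set of a simple model: strings `X♯` where `X` contains no `♯`. -/
def simplePred (sharp : α) : Set (List α) :=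
  {L | ∃ X : List α, sharp ∉ X ∧ L = X ++ [sharp]}

end SmullyanModel

inductive SmSym where
  | r
  | sharp
deriving DecidableEq



lemma simplePred_prefixFree :
    ∀ H ∈ SmullyanModel.simplePred SmSym.sharp, ∀ X : List SmSym, X ≠ [] →
      H ++ X ∉ SmullyanModel.simplePred SmSym.sharp := by
  rintro H ⟨X, hX, rfl⟩ Y hY ⟨X', hX', hEq⟩
  have h1 : ((X ++ [SmSym.sharp]) ++ Y).getLast? = Y.getLast? :=
    List.getLast?_append_of_ne_nil _ hY
  have h2 : (X' ++ [SmSym.sharp]).getLast? = some SmSym.sharp := by simp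
  rw [hEq, h2] at h1
  obtain ⟨hne, hx⟩ := List.mem_getLast?_eq_getLast (l := Y) (x := SmSym.sharp) h1.symm
  have hmem : SmSym.sharp ∈ Y := hx ▸ List.getLast_mem hne
  have hc : ((X ++ [SmSym.sharp]) ++ Y).count SmSym.sharp
      = (X' ++ [SmSym.sharp]).count SmSym.sharp := by rw [hEq]
  simp [List.count_append, List.count_eq_zero_of_not_mem hX,
    List.count_eq_zero_of_not_mem hX'] at hc
  exact List.not_mem_of_count_eq_zero hc hmem

def myModel : SmullyanModel SmSym where
  pred := SmullyanModel.simplePred SmSym.sharp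
  prefixFree := simplePred_prefixFree
  phi := fun _ => ∅

lemma sharpsharp_not_pred : [SmSym.sharp, SmSym.sharp] ∉ myModel.pred := by
  rintro ⟨X, hX, hX2⟩
  rcases X with _ | ⟨a, _ | ⟨b, t⟩⟩ <;> simp_all

lemma myModel_trueSet : myModel.trueSet = ∅ := by
  ext S
  simp [SmullyanModel.trueSet, myModel]


/-- There is an`r`-simple model (Σ = {r, ♯}, Φ(♯) = ∅) satisfying F-Tarski⁺
but not T-Tarski. -/
theorem stmt_13 :
    ∃ M : SmullyanModel SmSym,
      M.pred = SmullyanModel.simplePred SmSym.sharp ∧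
      M.IsRModel SmSym.r ∧
      M.phi [SmSym.sharp] = ∅ ∧
      M.FTarskiPlus ∧
      ¬ M.TTarski := by
  refine ⟨myModel, rfl, ?_, rfl, ?_, ?_⟩
  · rintro H ⟨X, hX, rfl⟩
    constructor
    · exact ⟨SmSym.r :: X, by simp [hX], rfl⟩
    · ext K; simp [myModel]
  · rintro ⟨H, hH, hEq⟩
    have hmem : [SmSym.sharp, SmSym.sharp] ∈ myModel.falsePlus := by
      constructor
      · exact ⟨⟨[SmSym.sharp], ⟨[], by simp⟩, [SmSym.sharp], rfl⟩, sharpsharp_not_pred⟩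
      · rintro ⟨hT, -⟩
        rw [myModel_trueSet] at hT
        exact hT
    rw [hEq] at hmem
    exact hmem.1
  · intro h
    exact h ⟨[SmSym.sharp], ⟨[], by simp⟩, myModel_trueSet.symm⟩
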